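/- Let t be an element of a field F and let A be an associative unital F-algebra containing elements e, f satisfying e² = (1+t)e, f² = −f, fe = ef = −e. For nonzero z, w with z ≠ tw and w ≠ tz, define Ř(z,w) = 1 + ((1−z/w)/(1−t·w/z))e + (1−z/w)f. Then Ř(z,w)Ř(w,z) = 1. -/

import Mathlib

theorem expand_aux (F : Type*) [Field F] (A : Type*) [Ring A] [Algebra F A]
    (t : F) (e f : A)
    (he : e * e = (1 + t) • e) (hf : f * f = -f)
    (hfe : f * e = -e) (hef : e * f = -e) (a b a' b' : F) :
    (1 + a • e + b • f) * (1 + a' • e + b' • f) =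
      1 + (a + a' + (1 + t) * a * a' - a * b' - b * a') • e + (b + b' - b * b') • f := by
  simp only [mul_add, add_mul, one_mul, mul_one, smul_mul_smul_comm, he, hf, hef, hfe,
    smul_smul, smul_neg, smul_add]
  module

/-- Unitarity for the crossing Temperley–Lieb R-matrix
`Ř(z,w) = 1 + ((1−z/w)/(1−t·w/z)) e + (1−z/w) f`. -/
theorem stmt4 (F : Type*) [Field F] (A : Type*) [Ring A] [Algebra F A]
    (t : F) (e f : A)
    (he : e * e = (1 + t) • e) (hf : f * f = -f)
    (hfe : f * e = -e) (hef : e * f = -e)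
    (z w : F) (hz : z ≠ 0) (hw : w ≠ 0) (hzw : z ≠ t * w) (hwz : w ≠ t * z) :
    (1 + ((1 - z / w) / (1 - t * w / z)) • e + (1 - z / w) • f) *
      (1 + ((1 - w / z) / (1 - t * z / w)) • e + (1 - w / z) • f) = 1 := by
  have hz1 : z - t * w ≠ 0 := sub_ne_zero.mpr hzw
  have hw1 : w - t * z ≠ 0 := sub_ne_zero.mpr hwz
  have e1 : (1 - z / w) / (1 - t * w / z) = z * (w - z) / (w * (z - t * w)) := by
    rw [div_eq_div_iff]
    · field_simp
    · rw [sub_ne_zero]; intro h; apply hz1; field_simp at h; linear_combination h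
    · exact mul_ne_zero hw hz1
  have e2 : (1 - w / z) / (1 - t * z / w) = w * (z - w) / (z * (w - t * z)) := by
    rw [div_eq_div_iff]
    · field_simp
    · rw [sub_ne_zero]; intro h; apply hw1; field_simp at h; linear_combination h
    · exact mul_ne_zero hz hw1
  rw [expand_aux F A t e f he hf hfe hef, e1, e2]
  have c1 : z * (w - z) / (w * (z - t * w)) + w * (z - w) / (z * (w - t * z)) +
      (1 + t) * (z * (w - z) / (w * (z - t * w))) * (w * (z - w) / (z * (w - t * z))) -
      z * (w - z) / (w * (z - t * w)) * (1 - w / z) -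
      (1 - z / w) * (w * (z - w) / (z * (w - t * z))) = 0 := by
    field_simp [mul_comm w t ▸ hz1, mul_comm z t ▸ hw1]
    ring
  have c2 : (1 - z / w) + (1 - w / z) - (1 - z / w) * (1 - w / z) = 0 := by
    field_simp
    ring
  rw [c1, c2, zero_smul, zero_smul, add_zero, add_zero]
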